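/- Let B be a standard Brownian motion on [0,1]. Then almost surely the events {V(B)_1 > 0} and {V(B)_t > 0 for all t ∈ (0,1]} coincide; consequently P( V(B)_t > 0 for all t ∈ (0,1] ) = P(B_1 > 0) = 1/2. -/

import Mathlib

open MeasureTheory ProbabilityTheory Real Set Filter
open scoped Topology

/-- The first time at which a function `f` attains its minimum over `[0,1]`. -/
noncomputable def vervaatTau (f : ℝ → ℝ) : ℝ :=
  sInf {t | t ∈ Set.Icc (0:ℝ) 1 ∧ ∀ s ∈ Set.Icc (0:ℝ) 1, f t ≤ f s}

/-- The Vervaat transform of a function `f : [0,1] → ℝ`: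
`V(f)(t) = f(τ(f)+t mod 1) + f(1)·1_{t+τ(f) ≥ 1} − f(τ(f))`, where `τ(f)` is the first
time at which `f` attains its minimum over `[0,1]`. -/
noncomputable def vervaat (f : ℝ → ℝ) (t : ℝ) : ℝ :=
  if 1 ≤ t + vervaatTau f then f (t + vervaatTau f - 1) + f 1 - f (vervaatTau f)
  else f (t + vervaatTau f) - f (vervaatTau f)

/-- `B` is a standard Brownian motion on `[0,1]` under the probability measure `P`:
it starts at `0`, has continuous paths, and has independent Gaussian increments with
`B_t − B_s ∼ N(0, t−s)` for `0 ≤ s ≤ t ≤ 1`. -/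
structure IsBrownianMotion {Ω : Type*} [MeasurableSpace Ω] (P : Measure Ω)
    (B : ℝ → Ω → ℝ) : Prop where
  meas : ∀ t, Measurable (B t)
  cont : ∀ ω, ContinuousOn (fun t => B t ω) (Set.Icc 0 1)
  init : ∀ ω, B 0 ω = 0
  incr_law : ∀ s t : ℝ, 0 ≤ s → s ≤ t → t ≤ 1 →
    Measure.map (fun ω => B t ω - B s ω) P = gaussianReal 0 (t - s).toNNReal
  indep_incr : ∀ (n : ℕ) (τ : Fin (n + 1) → ℝ), Monotone τ →
    (∀ i, τ i ∈ Set.Icc (0:ℝ) 1) →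
    iIndepFun
      (fun (i : Fin n) => fun ω => B (τ i.succ) ω - B (τ i.castSucc) ω) P

/-- The Brownian bridge from `0` to `lam` built from `B`:
`B^{λ,br}_t = B_t − t·B_1 + λ·t`. -/
noncomputable def bridge {Ω : Type*} (B : ℝ → Ω → ℝ) (lam : ℝ) (t : ℝ) (ω : Ω) : ℝ :=
  B t ω - t * B 1 ω + lam * t

section Det

variable {f : ℝ → ℝ}

/-- the argmin set -/
def minSet (f : ℝ → ℝ) : Set ℝ := {t | t ∈ Set.Icc (0:ℝ) 1 ∧ ∀ s ∈ Set.Icc (0:ℝ) 1, f t ≤ f s}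

lemma minSet_nonempty (hf : ContinuousOn f (Icc 0 1)) : (minSet f).Nonempty := by
  obtain ⟨x, hx, hmin⟩ := isCompact_Icc.exists_isMinOn (α := ℝ) ⟨0, by norm_num⟩ hf
  exact ⟨x, hx, fun s hs => hmin hs⟩

lemma minSet_isClosed (hf : ContinuousOn f (Icc 0 1)) : IsClosed (minSet f) := by
  have : minSet f = ⋂ s ∈ Icc (0:ℝ) 1, {t | t ∈ Icc (0:ℝ) 1 ∧ f t ≤ f s} := by
    ext t
    simp only [minSet, mem_setOf_eq, mem_iInter]
    constructor
    · rintro ⟨h1, h2⟩ s hs; exact ⟨h1, h2 s hs⟩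
    · intro h
      exact ⟨(h 0 (by norm_num)).1, fun s hs => (h s hs).2⟩
  rw [this]
  refine isClosed_biInter fun s hs => ?_
  have : {t | t ∈ Icc (0:ℝ) 1 ∧ f t ≤ f s} = Icc 0 1 ∩ f ⁻¹' Iic (f s) := rfl
  rw [this]
  exact ContinuousOn.preimage_isClosed_of_isClosed hf isClosed_Icc isClosed_Iic

lemma vervaatTau_mem (hf : ContinuousOn f (Icc 0 1)) : vervaatTau f ∈ minSet f := by
  refine IsClosed.csInf_mem (minSet_isClosed hf) (minSet_nonempty hf) ⟨0, fun x hx => hx.1.1⟩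

lemma vervaatTau_mem_Icc (hf : ContinuousOn f (Icc 0 1)) : vervaatTau f ∈ Icc (0:ℝ) 1 :=
  (vervaatTau_mem hf).1

lemma vervaat_one (hf : ContinuousOn f (Icc 0 1)) : vervaat f 1 = f 1 := by
  have h := (vervaatTau_mem_Icc hf).1
  rw [vervaat, if_pos (by linarith)]
  have : (1 : ℝ) + vervaatTau f - 1 = vervaatTau f := by ring
  rw [this]; ring

/-- main deterministic lemma -/
lemma vervaat_pos_of_unique (hf : ContinuousOn f (Icc 0 1)) (h0 : f 0 = 0)
    (huniq : (minSet f).Subsingleton) (h1 : 0 < f 1) :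
    ∀ t ∈ Ioc (0:ℝ) 1, 0 < vervaat f t := by
  intro t ht
  set τ := vervaatTau f with hτdef
  have hτ := vervaatTau_mem hf
  have hτIcc := hτ.1
  have hτ0 : f τ ≤ 0 := by simpa [h0] using hτ.2 0 (by norm_num)
  have hτne1 : τ ≠ 1 := fun h => by rw [h] at hτ0; linarith
  have hτlt1 : τ < 1 := lt_of_le_of_ne hτIcc.2 hτne1
  rw [vervaat]
  split_ifs with hc
  · have hmem : t + τ - 1 ∈ Icc (0:ℝ) 1 := ⟨by linarith, by have := ht.2; linarith⟩
    have := hτ.2 _ hmem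
    linarith
  · push_neg at hc
    have hmem : t + τ ∈ Icc (0:ℝ) 1 := ⟨by have := ht.1; have := hτIcc.1; linarith, le_of_lt hc⟩
    have hle := hτ.2 _ hmem
    rcases lt_or_eq_of_le hle with h | h
    · linarith
    · exfalso
      have : t + τ ∈ minSet f := ⟨hmem, fun s hs => h ▸ hτ.2 s hs⟩
      have := huniq this hτ
      have := ht.1
      linarith

lemma subsingleton_minSet_of_sInf_ne (hf : ContinuousOn f (Icc 0 1))
    (h : ∀ q r : ℚ, 0 < (q:ℝ) → (q:ℝ) < r → (r:ℝ) < 1 →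
      sInf (f '' Icc 0 (q:ℝ)) ≠ sInf (f '' Icc (r:ℝ) 1)) :
    (minSet f).Subsingleton := by
  intro a ha b hb
  by_contra hab
  wlog hlt : a < b generalizing a b
  · exact this hb ha (Ne.symm hab) (lt_of_le_of_ne (not_lt.mp hlt) (Ne.symm hab))
  obtain ⟨q, hq1, hq2⟩ := exists_rat_btwn hlt
  obtain ⟨r, hr1, hr2⟩ := exists_rat_btwn hq2
  have haIcc := ha.1
  have hbIcc := hb.1
  have hq0 : 0 < (q:ℝ) := lt_of_le_of_lt haIcc.1 hq1
  have hr1' : (r:ℝ) < 1 := lt_of_lt_of_le hr2 hbIcc.2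
  refine h q r hq0 hr1 hr1' ?_
  have hsub1 : Icc 0 (q:ℝ) ⊆ Icc 0 1 := Icc_subset_Icc le_rfl (by linarith)
  have hsub2 : Icc (r:ℝ) 1 ⊆ Icc 0 1 := Icc_subset_Icc (by linarith [haIcc.1]) le_rfl
  have h1 : sInf (f '' Icc 0 (q:ℝ)) = f a := by
    apply le_antisymm
    · exact csInf_le ⟨f a, by rintro y ⟨x, hx, rfl⟩; exact ha.2 x (hsub1 hx)⟩
        ⟨a, ⟨haIcc.1, le_of_lt hq1⟩, rfl⟩
    · exact le_csInf ⟨f a, a, ⟨haIcc.1, le_of_lt hq1⟩, rfl⟩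
        (by rintro y ⟨x, hx, rfl⟩; exact ha.2 x (hsub1 hx))
  have h2 : sInf (f '' Icc (r:ℝ) 1) = f b := by
    apply le_antisymm
    · exact csInf_le ⟨f b, by rintro y ⟨x, hx, rfl⟩; exact hb.2 x (hsub2 hx)⟩
        ⟨b, ⟨le_of_lt hr2, hbIcc.2⟩, rfl⟩
    · exact le_csInf ⟨f b, b, ⟨le_of_lt hr2, hbIcc.2⟩, rfl⟩
        (by rintro y ⟨x, hx, rfl⟩; exact hb.2 x (hsub2 hx))
  have hfa : f a = f b := le_antisymm (ha.2 b hbIcc) (hb.2 a haIcc)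
  rw [h1, h2, hfa]

end Det


lemma measurable_finset_inf' {Ω ι : Type*} [MeasurableSpace Ω] (s : Finset ι) (hs : s.Nonempty)
    (f : ι → Ω → ℝ) (hf : ∀ i, Measurable (f i)) :
    Measurable (fun ω => s.inf' hs (fun i => f i ω)) := by
  induction hs using Finset.Nonempty.cons_induction with
  | singleton i => simpa using hf i
  | cons i s his hs ih =>
      have heq : (fun ω => (Finset.cons i s his).inf' (Finset.cons_nonempty his) fun j => f j ω)
          = fun ω => min (f i ω) (s.inf' hs fun j => f j ω) :=
        funext fun ω => Finset.inf'_cons (H := hs) (f := fun j => f j ω)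
      exact heq ▸ (hf i).min ih

lemma finset_inf'_sub_const {ι : Type*} (s : Finset ι) (hs : s.Nonempty) (f : ι → ℝ) (c : ℝ) :
    s.inf' hs f - c = s.inf' hs (fun i => f i - c) := by
  apply le_antisymm
  · rw [Finset.le_inf'_iff]
    intro i hi
    have := Finset.inf'_le f hi
    linarith
  · have h : ∀ i ∈ s, s.inf' hs (fun i => f i - c) ≤ f i - c := fun i hi => Finset.inf'_le _ hi
    have : s.inf' hs (fun i => f i - c) + c ≤ s.inf' hs f := by
      rw [Finset.le_inf'_iff]
      intro i hi
      linarith [h i hi]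
    linarith

lemma range_nonempty_succ (n : ℕ) : (Finset.range (n+1)).Nonempty := ⟨0, by simp⟩

/-- grid minima converge to the infimum over the interval -/
lemma tendsto_grid_inf {f : ℝ → ℝ} {a b : ℝ} (hab : a < b) (hf : ContinuousOn f (Icc a b)) :
    Tendsto (fun n : ℕ => (Finset.range (n+2)).inf' (range_nonempty_succ (n+1))
      (fun i => f (a + (b-a)*i/(n+1)))) atTop (𝓝 (sInf (f '' Icc a b))) := by
  obtain ⟨x₀, hx₀, hmin⟩ := isCompact_Icc.exists_isMinOn ⟨a, le_rfl, le_of_lt hab⟩ hf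
  have hbdd : BddBelow (f '' Icc a b) := ⟨f x₀, by rintro y ⟨x, hx, rfl⟩; exact hmin hx⟩
  have hm : sInf (f '' Icc a b) = f x₀ := by
    apply le_antisymm (csInf_le hbdd ⟨x₀, hx₀, rfl⟩)
    exact le_csInf ⟨f x₀, x₀, hx₀, rfl⟩ (by rintro y ⟨x, hx, rfl⟩; exact hmin hx)
  rw [hm]
  have hgrid_mem : ∀ n : ℕ, ∀ i ∈ Finset.range (n+2), a + (b-a)*i/(n+1) ∈ Icc a b := by
    intro n i hi
    rw [Finset.mem_range] at hi
    have hi' : (i:ℝ) ≤ n+1 := by exact_mod_cast Nat.lt_succ_iff.mp hi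
    have hn : (0:ℝ) < n+1 := by positivity
    constructor
    · have h0ba : (0:ℝ) ≤ b - a := by linarith
      have : 0 ≤ (b-a)*i/(n+1) := by positivity
      linarith
    · have : (b-a)*i/(n+1) ≤ (b-a) := by
        rw [div_le_iff₀ hn]
        nlinarith
      linarith
  rw [Metric.tendsto_atTop]
  intro ε hε
  -- continuity at x₀ within Icc
  have hc := hf x₀ hx₀
  rw [Metric.continuousWithinAt_iff] at hc
  obtain ⟨δ, hδ, hδc⟩ := hc (ε/2) (by linarith)
  -- choose N with (b-a)/(N+1) < δ
  obtain ⟨N, hN⟩ := exists_nat_gt ((b-a)/δ)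
  refine ⟨N, fun n hn => ?_⟩
  have hn1 : (0:ℝ) < n+1 := by positivity
  have hstep : (b-a)/(n+1) < δ := by
    rw [div_lt_iff₀ hn1]
    have h1 : (b-a)/δ < N + 1 := lt_of_lt_of_le hN (by linarith : (N:ℝ) ≤ (N:ℝ) + 1)
    have h2 : (b-a) < δ*(N+1) := by
      rw [div_lt_iff₀ hδ] at h1; linarith
    have h3 : (N:ℝ)+1 ≤ n+1 := by exact_mod_cast Nat.succ_le_succ hn
    nlinarith
  set W := (Finset.range (n+2)).inf' (range_nonempty_succ (n+1)) (fun i => f (a + (b-a)*i/(n+1)))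
  have hlow : f x₀ ≤ W := by
    rw [Finset.le_inf'_iff]
    intro i hi
    exact hmin (hgrid_mem n i hi)
  -- find grid point near x₀
  set θ := (x₀ - a)/(b - a) with hθdef
  have hba : (0:ℝ) < b - a := by linarith
  have hθ0 : 0 ≤ θ := by
    apply div_nonneg _ (le_of_lt hba); linarith [hx₀.1]
  have hθ1 : θ ≤ 1 := by
    rw [div_le_one hba]; linarith [hx₀.2]
  set i := ⌊θ*(n+1)⌋₊ with hidef
  have hi_le : (i:ℝ) ≤ θ*(n+1) := Nat.floor_le (by positivity)
  have hi_gt : θ*(n+1) < i + 1 := Nat.lt_floor_add_one _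
  have hi_mem : i ∈ Finset.range (n+2) := by
    rw [Finset.mem_range, Nat.lt_succ_iff]
    have : (i:ℝ) ≤ (n:ℝ)+1 := le_trans hi_le (by nlinarith)
    exact_mod_cast this
  set g := a + (b-a)*i/(n+1) with hgdef
  have hgx : |g - x₀| < δ := by
    have hx0eq : x₀ = a + (b-a)*θ := by
      rw [hθdef]; field_simp; ring
    have h1 : g - x₀ = (b-a)*((i:ℝ) - θ*(n+1))/(n+1) := by
      rw [hgdef, hx0eq]; field_simp; ring
    set u := (i:ℝ) - θ*(n+1) with hudef
    have hu1 : -1 < u := by rw [hudef]; linarith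
    have hu2 : u ≤ 0 := by rw [hudef]; linarith
    have hnum1 : -(b-a) < (b-a)*u := by nlinarith
    have hnum2 : (b-a)*u ≤ 0 := by nlinarith
    have hlow' : -((b-a)/(n+1)) < (b-a)*u/(n+1) := by
      rw [← neg_div, div_lt_div_iff₀ hn1 hn1]
      nlinarith
    have hhigh' : (b-a)*u/(n+1) ≤ 0 := div_nonpos_of_nonpos_of_nonneg hnum2 (le_of_lt hn1)
    rw [abs_lt]
    constructor
    · rw [h1]; linarith
    · rw [h1]; linarith
  have hgIcc : g ∈ Icc a b := hgrid_mem n i hi_mem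
  have hfg : |f g - f x₀| < ε/2 := by
    have := hδc hgIcc (by rwa [Real.dist_eq])
    rwa [Real.dist_eq] at this
  have hup : W ≤ f g := Finset.inf'_le _ hi_mem
  rw [Real.dist_eq, abs_lt]
  constructor
  · linarith
  · have : f g < f x₀ + ε/2 := by
      have := abs_lt.mp hfg; linarith [this.2]
    linarith


section ProbM

variable {Ω : Type*} [MeasurableSpace Ω] {P : Measure Ω} {B : ℝ → Ω → ℝ}

/-- approximating random variable -/
noncomputable def Yaux (B : ℝ → Ω → ℝ) (q r : ℝ) (n : ℕ) (ω : Ω) : ℝ :=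
  ((Finset.range (n+2)).inf' (range_nonempty_succ (n+1))
      (fun i => B (0 + (q - 0) * i / (n+1)) ω) - B q ω)
  - ((Finset.range (n+2)).inf' (range_nonempty_succ (n+1))
      (fun i => B (r + (1 - r) * i / (n+1)) ω) - B r ω)

lemma measurable_Yaux (hB : IsBrownianMotion P B) (q r : ℝ) (n : ℕ) :
    Measurable (Yaux B q r n) := by
  apply Measurable.sub
  · exact (measurable_finset_inf' _ _ _ (fun i => hB.meas _)).sub (hB.meas q)
  · exact (measurable_finset_inf' _ _ _ (fun i => hB.meas _)).sub (hB.meas r)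

/-- the grid function -/
noncomputable def sigAux (q r : ℝ) (N : ℕ) (i : ℕ) : ℝ :=
  if i ≤ N then q * i / N else r + (1 - r) * ((i - (N+1) : ℕ) : ℝ) / N

lemma indepFun_Z_Yaux (hB : IsBrownianMotion P B) {q r : ℝ}
    (hq : 0 < q) (hqr : q < r) (hr : r < 1) (n : ℕ) :
    IndepFun (fun ω => B r ω - B q ω) (Yaux B q r n) P := by
  set N := n + 1 with hNdef
  have hNpos : (0:ℝ) < N := by positivity
  have hNcast : ((N:ℕ) : ℝ) = (n:ℝ) + 1 := by push_cast [hNdef]; ring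
  set σ : ℕ → ℝ := sigAux q r N with hσdef
  -- basic values
  have hσle : ∀ i, i ≤ N → σ i = q * i / N := fun i hi => if_pos hi
  have hσgt : ∀ j : ℕ, σ (N + 1 + j) = r + (1 - r) * j / N := by
    intro j
    have h1 : ¬ (N + 1 + j ≤ N) := by omega
    have h2 : (N + 1 + j) - (N + 1) = j := by omega
    simp only [hσdef, sigAux, if_neg h1, h2]
  have hσN : σ N = q := by
    rw [hσle N le_rfl]
    field_simp
  have hσN1 : σ (N+1) = r := by
    have := hσgt 0
    simpa using this
  -- monotone
  have hσmono : Monotone σ := by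
    apply monotone_nat_of_le_succ
    intro i
    rcases lt_trichotomy i N with hiN | hiN | hiN
    · rw [hσle i (le_of_lt hiN), hσle (i+1) hiN]
      have hcast : ((i:ℕ):ℝ) ≤ ((i+1 : ℕ):ℝ) := by push_cast; linarith
      gcongr
    · rw [hiN, hσN, hσN1]
      linarith
    · have h1 : ¬ (i ≤ N) := by omega
      have h1' : ¬ (i + 1 ≤ N) := by omega
      simp only [hσdef, sigAux, if_neg h1, if_neg h1']
      have hc1 : ((i - (N+1) : ℕ) : ℝ) ≤ ((i + 1 - (N+1) : ℕ) : ℝ) := by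
        have : (i - (N+1)) ≤ (i + 1 - (N+1)) := by omega
        exact_mod_cast this
      have h1r : (0:ℝ) ≤ 1 - r := by linarith
      have : (1 - r) * ((i - (N+1) : ℕ) : ℝ) / N ≤ (1 - r) * ((i + 1 - (N+1) : ℕ) : ℝ) / N := by
        gcongr
      linarith
  -- membership
  have hσmem : ∀ i : ℕ, i ≤ 2*N+1 → σ i ∈ Icc (0:ℝ) 1 := by
    intro i hi
    by_cases h : i ≤ N
    · rw [hσle i h]
      constructor
      · positivity
      · have hicast : ((i:ℕ):ℝ) ≤ (N:ℝ) := by exact_mod_cast h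
        have : q * i / N ≤ q * N / N := by gcongr
        have hqq : q * N / N = q := by field_simp
        rw [hqq] at this
        linarith
    · push_neg at h
      obtain ⟨j, rfl⟩ : ∃ j, i = N + 1 + j := ⟨i - (N+1), by omega⟩
      rw [hσgt j]
      have hjN : (j:ℝ) ≤ (N:ℝ) := by
        have : j ≤ N := by omega
        exact_mod_cast this
      constructor
      · have : 0 ≤ (1 - r) * j / N := by
          have : (0:ℝ) ≤ 1 - r := by linarith
          positivity
        linarith
      · have h1r : (0:ℝ) ≤ 1 - r := by linarith
        have : (1 - r) * j / N ≤ (1 - r) * N / N := by gcongr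
        have heq : (1 - r) * N / N = 1 - r := by field_simp
        rw [heq] at this
        linarith
  -- independence of increments
  have hInd : iIndepFun
      (fun (i : Fin (2*N+1)) => fun ω => B (σ (i.val + 1)) ω - B (σ i.val) ω) P := by
    have h := hB.indep_incr (2*N+1) (fun i => σ i.val)
      (fun i j hij => hσmono (by exact_mod_cast hij))
      (fun i => hσmem i.val (by omega))
    exact h
  set X : ℕ → Ω → ℝ := fun j ω => B (σ (j + 1)) ω - B (σ j) ω with hXdef
  have hXmeas : ∀ j : ℕ, Measurable (X j) := fun j => (hB.meas _).sub (hB.meas _)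
  -- telescoping
  have tele : ∀ (ω : Ω) (c d : ℕ), c ≤ d →
      ∑ j ∈ Finset.Ico c d, X j ω = B (σ d) ω - B (σ c) ω := by
    intro ω c d hcd
    induction d, hcd using Nat.le_induction with
    | base => simp
    | succ d hcd ih =>
        rw [Finset.sum_Ico_succ_top (by omega), ih]
        simp only [hXdef]
        ring
  -- the distinguished index
  set a : Fin (2*N+1) := ⟨N, by omega⟩ with hadef
  have hIndF := hInd.indepFun_finset {a} {a}ᶜ disjoint_compl_right
    (fun i => (hB.meas _).sub (hB.meas _))
  -- left composition
  set φ : (({a} : Finset (Fin (2*N+1))) → ℝ) → ℝ :=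
    fun v => v ⟨a, Finset.mem_singleton_self a⟩ with hφdef
  have hφmeas : Measurable φ := measurable_pi_apply _
  -- extension map and g function
  set ext : ((({a}ᶜ : Finset (Fin (2*N+1))) : Type) → ℝ) → (ℕ → ℝ) :=
    fun v j => if h : j < 2*N+1 then
      (if h2 : (⟨j, h⟩ : Fin (2*N+1)) ∈ ({a}ᶜ : Finset (Fin (2*N+1))) then v ⟨⟨j, h⟩, h2⟩ else 0)
      else 0 with hextdef
  have hextmeas : Measurable ext := by
    apply measurable_pi_lambda
    intro j
    by_cases h : j < 2*N+1
    · by_cases h2 : (⟨j, h⟩ : Fin (2*N+1)) ∈ ({a}ᶜ : Finset (Fin (2*N+1)))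
      · simp only [hextdef, dif_pos h, dif_pos h2]
        exact measurable_pi_apply _
      · simp only [hextdef, dif_pos h, dif_neg h2]
        exact measurable_const
    · simp only [hextdef, dif_neg h]
      exact measurable_const
  set gfun : (ℕ → ℝ) → ℝ := fun y =>
    (Finset.range (N+1)).inf' (range_nonempty_succ N)
      (fun i => -(∑ j ∈ Finset.Ico i N, y j) - (0:ℝ))
    - (Finset.range (N+1)).inf' (range_nonempty_succ N)
      (fun i => (∑ j ∈ Finset.Ico (N+1) (N+1+i), y j) - (0:ℝ)) with hgdef
  have hgmeas : Measurable gfun := by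
    apply Measurable.sub
    · apply measurable_finset_inf'
      intro i
      exact ((Finset.measurable_sum _ (fun j _ => measurable_pi_apply j)).neg).sub measurable_const
    · apply measurable_finset_inf'
      intro i
      exact (Finset.measurable_sum _ (fun j _ => measurable_pi_apply j)).sub measurable_const
  have hcomp := hIndF.comp hφmeas (hgmeas.comp hextmeas)
  -- identify π left with Z
  have hleft : (φ ∘ fun ω (i : ({a} : Finset (Fin (2*N+1)))) => X (i : Fin (2*N+1)).val ω)
      = fun ω => B r ω - B q ω := by
    funext ω
    simp only [Function.comp_apply, hφdef]
    show X ((a : Fin (2*N+1))).val ω = B r ω - B q ω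
    simp only [hXdef, hadef]
    rw [hσN1, hσN]
  -- identify right with Yaux
  have hright : ((gfun ∘ ext) ∘ fun ω (i : (({a}ᶜ : Finset (Fin (2*N+1))) : Type)) =>
      X (i : Fin (2*N+1)).val ω) = Yaux B q r n := by
    funext ω
    simp only [Function.comp_apply]
    have hy : ∀ j : ℕ, j ≤ 2*N ∧ j ≠ N →
        ext (fun (i : (({a}ᶜ : Finset (Fin (2*N+1))) : Type)) => X (i : Fin (2*N+1)).val ω) j
          = X j ω := by
      rintro j ⟨hj1, hj2⟩
      have h : j < 2*N+1 := by omega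
      have h2 : (⟨j, h⟩ : Fin (2*N+1)) ∈ ({a}ᶜ : Finset (Fin (2*N+1))) := by
        simp only [Finset.mem_compl, Finset.mem_singleton, hadef]
        intro hc
        apply hj2
        exact Fin.mk.inj_iff.mp hc
      simp only [hextdef, dif_pos h, dif_pos h2]
    rw [hgdef]
    simp only []
    have hfirst : (Finset.range (N+1)).inf' (range_nonempty_succ N)
        (fun i => -(∑ j ∈ Finset.Ico i N,
          ext (fun (i : (({a}ᶜ : Finset (Fin (2*N+1))) : Type)) => X (i : Fin (2*N+1)).val ω) j) - 0)
        = (Finset.range (n+2)).inf' (range_nonempty_succ (n+1))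
            (fun i => B (0 + (q - 0) * i / (n+1)) ω) - B q ω := by
      rw [finset_inf'_sub_const]
      refine Finset.inf'_congr _ rfl fun i hi => ?_
      rw [Finset.mem_range] at hi
      have hiN : i ≤ N := by omega
      have hsum : ∑ j ∈ Finset.Ico i N,
          ext (fun (i : (({a}ᶜ : Finset (Fin (2*N+1))) : Type)) => X (i : Fin (2*N+1)).val ω) j
          = B (σ N) ω - B (σ i) ω := by
        rw [← tele ω i N hiN]
        apply Finset.sum_congr rfl
        intro j hj
        rw [Finset.mem_Ico] at hj
        exact hy j ⟨by omega, by omega⟩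
      rw [hsum, hσN]
      have harg : σ i = 0 + (q - 0) * i / (n+1) := by
        rw [hσle i hiN, hNcast]
        ring
      rw [harg]
      ring
    have hsecond : (Finset.range (N+1)).inf' (range_nonempty_succ N)
        (fun i => (∑ j ∈ Finset.Ico (N+1) (N+1+i),
          ext (fun (i : (({a}ᶜ : Finset (Fin (2*N+1))) : Type)) => X (i : Fin (2*N+1)).val ω) j) - 0)
        = (Finset.range (n+2)).inf' (range_nonempty_succ (n+1))
            (fun i => B (r + (1 - r) * i / (n+1)) ω) - B r ω := by
      rw [finset_inf'_sub_const]
      refine Finset.inf'_congr _ rfl fun i hi => ?_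
      rw [Finset.mem_range] at hi
      have hiN : i ≤ N := by omega
      have hsum : ∑ j ∈ Finset.Ico (N+1) (N+1+i),
          ext (fun (i : (({a}ᶜ : Finset (Fin (2*N+1))) : Type)) => X (i : Fin (2*N+1)).val ω) j
          = B (σ (N+1+i)) ω - B (σ (N+1)) ω := by
        rw [← tele ω (N+1) (N+1+i) (by omega)]
        apply Finset.sum_congr rfl
        intro j hj
        rw [Finset.mem_Ico] at hj
        exact hy j ⟨by omega, by omega⟩
      rw [hsum, hσN1, hσgt i]
      have harg : r + (1 - r) * i / (N:ℝ) = r + (1 - r) * i / (n+1) := by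
        rw [hNcast]
      rw [harg]
      ring
    rw [hfirst, hsecond]
    rfl
  rw [hleft, hright] at hcomp
  exact hcomp


lemma tendsto_Yaux (hB : IsBrownianMotion P B) {q r : ℝ}
    (hq : 0 < q) (hqr : q < r) (hr : r < 1) (ω : Ω) :
    Tendsto (fun n => Yaux B q r n ω) atTop
      (𝓝 ((sInf ((fun u => B u ω) '' Icc 0 q) - B q ω)
        - (sInf ((fun u => B u ω) '' Icc r 1) - B r ω))) := by
  have h1 : ContinuousOn (fun u => B u ω) (Icc 0 q) :=
    (hB.cont ω).mono (Icc_subset_Icc le_rfl (by linarith))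
  have h2 : ContinuousOn (fun u => B u ω) (Icc r 1) :=
    (hB.cont ω).mono (Icc_subset_Icc (by linarith) le_rfl)
  have hg1 := tendsto_grid_inf hq h1
  have hg2 := tendsto_grid_inf (lt_of_lt_of_le hr le_rfl : r < 1) h2
  exact ((hg1.sub tendsto_const_nhds).sub (hg2.sub tendsto_const_nhds))

lemma gaussian_ball_le (v : NNReal) (hv : v ≠ 0) (y ε : ℝ) :
    gaussianReal 0 v {z : ℝ | |z - y| ≤ ε}
      ≤ ENNReal.ofReal ((Real.sqrt (2*π*v))⁻¹) * ENNReal.ofReal (2*ε) := by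
  have hset : {z : ℝ | |z - y| ≤ ε} = Icc (y - ε) (y + ε) := by
    ext z
    simp only [mem_setOf_eq, mem_Icc, abs_sub_le_iff]
    constructor <;> (intro h; constructor <;> linarith [h.1, h.2])
  rw [hset, gaussianReal_apply 0 hv]
  have hbound : ∀ x : ℝ, gaussianPDF 0 v x ≤ ENNReal.ofReal ((Real.sqrt (2*π*v))⁻¹) := by
    intro x
    rw [gaussianPDF]
    apply ENNReal.ofReal_le_ofReal
    rw [gaussianPDFReal]
    have hexp : rexp (-(x - 0)^2 / (2*v)) ≤ 1 := by
      rw [Real.exp_le_one_iff]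
      apply div_nonpos_of_nonpos_of_nonneg
      · simp [sq_nonneg]
      · positivity
    have hpos : (0:ℝ) ≤ (Real.sqrt (2*π*v))⁻¹ := by positivity
    calc (Real.sqrt (2*π*v))⁻¹ * rexp (-(x - 0)^2 / (2*v))
        ≤ (Real.sqrt (2*π*v))⁻¹ * 1 := by
          apply mul_le_mul_of_nonneg_left hexp hpos
      _ = (Real.sqrt (2*π*v))⁻¹ := mul_one _
  calc ∫⁻ x in Icc (y-ε) (y+ε), gaussianPDF 0 v x
      ≤ ∫⁻ _ in Icc (y-ε) (y+ε), ENNReal.ofReal ((Real.sqrt (2*π*v))⁻¹) := by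
        apply lintegral_mono
        intro x; exact hbound x
    _ = ENNReal.ofReal ((Real.sqrt (2*π*v))⁻¹) * volume (Icc (y-ε) (y+ε)) := by
        rw [setLIntegral_const]
    _ ≤ ENNReal.ofReal ((Real.sqrt (2*π*v))⁻¹) * ENNReal.ofReal (2*ε) := by
        rw [Real.volume_Icc]
        apply mul_le_mul_right (le_of_eq (by ring_nf))

lemma abs_le_prob_bound [IsProbabilityMeasure P] {Z Y : Ω → ℝ}
    (hZ : Measurable Z) (hY : Measurable Y) (hind : IndepFun Z Y P)
    {v : NNReal} (hv : v ≠ 0) (hlaw : Measure.map Z P = gaussianReal 0 v) (ε : ℝ) :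
    P {ω | |Z ω - Y ω| ≤ ε}
      ≤ ENNReal.ofReal ((Real.sqrt (2*π*v))⁻¹) * ENNReal.ofReal (2*ε) := by
  have hmap : Measure.map (fun ω => (Y ω, Z ω)) P = (Measure.map Y P).prod (Measure.map Z P) :=
    (indepFun_iff_map_prod_eq_prod_map_map hY.aemeasurable hZ.aemeasurable).mp hind.symm
  have hs : MeasurableSet {p : ℝ × ℝ | |p.2 - p.1| ≤ ε} := by
    have : {p : ℝ × ℝ | |p.2 - p.1| ≤ ε} = (fun p : ℝ × ℝ => |p.2 - p.1|) ⁻¹' Iic ε := rfl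
    rw [this]
    exact ((continuous_snd.sub continuous_fst).abs.measurable) measurableSet_Iic
  have hpre : {ω | |Z ω - Y ω| ≤ ε}
      = (fun ω => (Y ω, Z ω)) ⁻¹' {p : ℝ × ℝ | |p.2 - p.1| ≤ ε} := rfl
  rw [hpre, ← Measure.map_apply (hY.prodMk hZ) hs, hmap, Measure.prod_apply hs]
  have hslice : ∀ y : ℝ, (Measure.map Z P) (Prod.mk y ⁻¹' {p : ℝ × ℝ | |p.2 - p.1| ≤ ε})
      ≤ ENNReal.ofReal ((Real.sqrt (2*π*v))⁻¹) * ENNReal.ofReal (2*ε) := by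
    intro y
    have : Prod.mk y ⁻¹' {p : ℝ × ℝ | |p.2 - p.1| ≤ ε} = {z : ℝ | |z - y| ≤ ε} := rfl
    rw [this, hlaw]
    exact gaussian_ball_le v hv y ε
  have : IsProbabilityMeasure (Measure.map Y P) := Measure.isProbabilityMeasure_map hY.aemeasurable
  calc ∫⁻ y, (Measure.map Z P) (Prod.mk y ⁻¹' {p : ℝ × ℝ | |p.2 - p.1| ≤ ε}) ∂(Measure.map Y P)
      ≤ ∫⁻ _, ENNReal.ofReal ((Real.sqrt (2*π*v))⁻¹) * ENNReal.ofReal (2*ε) ∂(Measure.map Y P) :=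
        lintegral_mono hslice
    _ = ENNReal.ofReal ((Real.sqrt (2*π*v))⁻¹) * ENNReal.ofReal (2*ε) := by
        rw [lintegral_const, measure_univ, mul_one]

lemma E_null (hB : IsBrownianMotion P B) [IsProbabilityMeasure P] {q r : ℝ}
    (hq : 0 < q) (hqr : q < r) (hr : r < 1) :
    P {ω | sInf ((fun u => B u ω) '' Icc 0 q) = sInf ((fun u => B u ω) '' Icc r 1)} = 0 := by
  set Z : Ω → ℝ := fun ω => B r ω - B q ω with hZdef
  set E := {ω | sInf ((fun u => B u ω) '' Icc 0 q) = sInf ((fun u => B u ω) '' Icc r 1)} with hEdef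
  set v : NNReal := (r - q).toNNReal with hvdef
  have hv : v ≠ 0 := by
    simp only [hvdef, ne_eq, Real.toNNReal_eq_zero, not_le]
    linarith
  have hlaw : Measure.map Z P = gaussianReal 0 v :=
    hB.incr_law q r (le_of_lt hq) (le_of_lt hqr) (le_of_lt hr)
  have hZmeas : Measurable Z := (hB.meas r).sub (hB.meas q)
  set C := ENNReal.ofReal ((Real.sqrt (2*π*v))⁻¹) with hCdef
  have hCne : C ≠ ⊤ := ENNReal.ofReal_ne_top
  have key : ∀ ε : ℝ, 0 < ε → P E ≤ C * ENNReal.ofReal (2*ε) := by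
    intro ε hε
    set A : ℕ → Set Ω := fun n => {ω | |Z ω - Yaux B q r n ω| ≤ ε} with hAdef
    set Cs : ℕ → Set Ω := fun m => ⋂ n, ⋂ (_ : m ≤ n), A n with hCsdef
    have hsub : E ⊆ ⋃ m, Cs m := by
      intro ω hω
      have htend := tendsto_Yaux hB hq hqr hr ω
      have hlim : Tendsto (fun n => Yaux B q r n ω) atTop (𝓝 (Z ω)) := by
        have heq : (sInf ((fun u => B u ω) '' Icc 0 q) - B q ω)
            - (sInf ((fun u => B u ω) '' Icc r 1) - B r ω) = Z ω := by
          have := hω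
          simp only [hEdef, mem_setOf_eq] at this
          rw [this, hZdef]
          ring
        rwa [heq] at htend
      rw [Metric.tendsto_atTop] at hlim
      obtain ⟨m, hm⟩ := hlim ε hε
      refine mem_iUnion.mpr ⟨m, ?_⟩
      simp only [hCsdef, mem_iInter]
      intro n hn
      have := hm n hn
      rw [Real.dist_eq] at this
      simp only [hAdef, mem_setOf_eq]
      rw [abs_sub_comm]
      exact le_of_lt this
    have hmono : Monotone Cs := by
      intro m m' hmm'
      simp only [hCsdef]
      intro ω hω
      simp only [mem_iInter] at *
      intro n hn
      exact hω n (le_trans hmm' hn)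
    calc P E ≤ P (⋃ m, Cs m) := measure_mono hsub
      _ = ⨆ m, P (Cs m) := hmono.measure_iUnion
      _ ≤ C * ENNReal.ofReal (2*ε) := by
          apply iSup_le
          intro m
          have h1 : Cs m ⊆ A m := fun ω hω => by
            simp only [hCsdef, mem_iInter] at hω
            exact hω m le_rfl
          refine le_trans (measure_mono h1) ?_
          exact abs_le_prob_bound hZmeas (measurable_Yaux hB q r m)
            (indepFun_Z_Yaux hB hq hqr hr m) hv hlaw ε
  have htend0 : Tendsto (fun k : ℕ => C * ENNReal.ofReal (2 * (1/(k+1)))) atTop (𝓝 0) := by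
    have h1 : Tendsto (fun k : ℕ => 2 * (1/((k:ℝ)+1))) atTop (𝓝 0) := by
      have := tendsto_one_div_add_atTop_nhds_zero_nat (𝕜 := ℝ)
      have h2 := this.const_mul (2:ℝ)
      simpa using h2
    have h2 : Tendsto (fun k : ℕ => ENNReal.ofReal (2 * (1/((k:ℝ)+1)))) atTop (𝓝 0) := by
      have := ENNReal.tendsto_ofReal h1
      simpa using this
    have h3 := ENNReal.Tendsto.const_mul h2 (Or.inr hCne)
    simpa using h3
  refine le_antisymm ?_ (zero_le)
  refine ge_of_tendsto htend0 ?_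
  apply Eventually.of_forall
  intro k
  exact key (1/((k:ℝ)+1)) (by positivity)

end ProbM

lemma gaussian_Ioi_half : (gaussianReal 0 1) (Ioi (0:ℝ)) = 1/2 := by
  set μ := gaussianReal 0 1 with hμdef
  have hv : (1 : NNReal) ≠ 0 := one_ne_zero
  have hneg : Measure.map (fun x : ℝ => -1 * x) μ = μ := by
    rw [hμdef, gaussianReal_map_const_mul (-1)]
    have h1 : (⟨(-1:ℝ)^2, sq_nonneg _⟩ : NNReal) = 1 := by
      ext; norm_num
    congr 1
    · norm_num
    · ext; norm_num
  have hIio : μ (Iio 0) = μ (Ioi 0) := by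
    have hmeas : Measurable (fun x : ℝ => -1 * x) := (measurable_id.const_mul (-1))
    have : (fun x : ℝ => -1 * x) ⁻¹' (Iio 0) = Ioi 0 := by
      ext x; simp only [mem_preimage, mem_Iio, mem_Ioi]; constructor <;> intro h <;> nlinarith
    calc μ (Iio 0) = (Measure.map (fun x : ℝ => -1 * x) μ) (Iio 0) := by rw [hneg]
      _ = μ ((fun x : ℝ => -1 * x) ⁻¹' (Iio 0)) := Measure.map_apply hmeas measurableSet_Iio
      _ = μ (Ioi 0) := by rw [this]
  have hzero : μ {(0:ℝ)} = 0 :=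
    gaussianReal_absolutelyContinuous 0 hv (by simp)
  have hcompl : μ ({(0:ℝ)}ᶜ) = 1 := by
    have : IsProbabilityMeasure μ := by rw [hμdef]; infer_instance
    rw [measure_compl (measurableSet_singleton 0) (measure_ne_top μ _), hzero, measure_univ]
    simp
  have hunion : μ (Iio 0) + μ (Ioi 0) = 1 := by
    rw [← measure_union (Set.disjoint_left.mpr (fun x hx hx' => absurd (mem_Ioi.mp hx') (not_lt.mpr (le_of_lt (mem_Iio.mp hx))))) measurableSet_Ioi, Set.Iio_union_Ioi, hcompl]
  rw [hIio] at hunion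
  have h2 : 2 * μ (Ioi 0) = 1 := by rw [two_mul]; exact hunion
  rw [ENNReal.eq_div_iff (by norm_num) (by norm_num)]
  exact h2

/-- For a standard Brownian motion `B` on `[0,1]`, almost surely the
events `{V(B)_1 > 0}` and `{V(B)_t > 0 for all t ∈ (0,1]}` coincide; consequently
`P(V(B)_t > 0 for all t ∈ (0,1]) = P(B_1 > 0) = 1/2`. -/
theorem vervaat_positive_iff {Ω : Type*} [MeasurableSpace Ω] (P : Measure Ω)
    [IsProbabilityMeasure P] (B : ℝ → Ω → ℝ) (hB : IsBrownianMotion P B) :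
    (∀ᵐ ω ∂P, (0 < vervaat (fun u => B u ω) 1
        ↔ ∀ t ∈ Set.Ioc (0:ℝ) 1, 0 < vervaat (fun u => B u ω) t))
    ∧ P {ω | ∀ t ∈ Set.Ioc (0:ℝ) 1, 0 < vervaat (fun u => B u ω) t}
        = P {ω | 0 < B 1 ω}
    ∧ (P {ω | ∀ t ∈ Set.Ioc (0:ℝ) 1, 0 < vervaat (fun u => B u ω) t}).toReal = 1 / 2 := by
  -- notation
  have hae : ∀ᵐ ω ∂P, ∀ q r : ℚ, 0 < (q:ℝ) → (q:ℝ) < (r:ℝ) → (r:ℝ) < 1 →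
      sInf ((fun u => B u ω) '' Set.Icc 0 (q:ℝ)) ≠ sInf ((fun u => B u ω) '' Set.Icc (r:ℝ) 1) := by
    rw [ae_all_iff]
    intro q
    rw [ae_all_iff]
    intro r
    by_cases h : 0 < (q:ℝ) ∧ (q:ℝ) < (r:ℝ) ∧ (r:ℝ) < 1
    · have h0 := E_null hB h.1 h.2.1 h.2.2
      have h1 := measure_eq_zero_iff_ae_notMem.mp h0
      filter_upwards [h1] with ω hω _ _ _
      exact hω
    · apply Eventually.of_forall
      intro ω h1 h2 h3
      exact absurd ⟨h1, h2, h3⟩ h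
  have h1 : ∀ᵐ ω ∂P, (0 < vervaat (fun u => B u ω) 1
      ↔ ∀ t ∈ Set.Ioc (0:ℝ) 1, 0 < vervaat (fun u => B u ω) t) := by
    filter_upwards [hae] with ω hω
    have hcont := hB.cont ω
    have h0 : (fun u => B u ω) 0 = 0 := hB.init ω
    have hV1 : vervaat (fun u => B u ω) 1 = (fun u => B u ω) 1 := vervaat_one hcont
    constructor
    · intro hpos
      have huniq := subsingleton_minSet_of_sInf_ne hcont hω
      rw [hV1] at hpos
      exact vervaat_pos_of_unique hcont h0 huniq hpos
    · intro hall
      exact hall 1 (by norm_num)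
  have h2 : P {ω | ∀ t ∈ Set.Ioc (0:ℝ) 1, 0 < vervaat (fun u => B u ω) t}
      = P {ω | 0 < B 1 ω} := by
    apply measure_congr
    rw [eventuallyEq_set]
    filter_upwards [h1] with ω hω
    constructor
    · intro hall
      have := hω.mpr hall
      rwa [vervaat_one (hB.cont ω)] at this
    · intro hb
      exact hω.mp (by rwa [vervaat_one (hB.cont ω)])
  have hmap : Measure.map (B 1) P = gaussianReal 0 1 := by
    have h := hB.incr_law 0 1 le_rfl zero_le_one le_rfl
    have heq : (fun ω => B 1 ω - B 0 ω) = B 1 := by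
      funext ω; rw [hB.init ω]; ring
    rw [heq] at h
    rw [h]
    norm_num
  have h3 : P {ω | 0 < B 1 ω} = 1/2 := by
    have hset : {ω | 0 < B 1 ω} = B 1 ⁻¹' Set.Ioi 0 := rfl
    rw [hset, ← Measure.map_apply (hB.meas 1) measurableSet_Ioi, hmap, gaussian_Ioi_half]
  refine ⟨h1, h2, ?_⟩
  rw [h2, h3]
  simp [ENNReal.toReal_div]
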